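/- arXiv:2605.03134 — 3 statements merged into one kernel-verified Lean document; each statement's English description precedes it below -/
import Mathlib

section
/- Fix a measurable loss L : Θ → ℝ with infimum L* > −∞ and a prior π with π(S_δ) > 0 for every δ > 0, where S_δ = {θ : L(θ) ≤ L* + δ}. For γ > 0 define J_γ(q) = E_q[L] + γ·KL(q‖π) and let q_γ be any minimiser of J_γ. Then, as γ → 0 along any sequence, E_{q_γ}[L] → L* and J_γ(q_γ) → L*. -/
open MeasureTheory ProbabilityTheory Filter
open scoped ENNReal

/-- Kullback–Leibler divergence `KL(q‖π) = ∫ log (dq/dπ) dq` (for `q ≪ π`). -/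
noncomputable def KL {Θ : Type*} [MeasurableSpace Θ] (q π : Measure Θ) : ℝ :=
  ∫ θ, llr q π θ ∂q

/-- The SoU / Gibbs objective `J_γ(q) = E_q[L] + γ·KL(q‖π)`. -/
noncomputable def Jobj {Θ : Type*} [MeasurableSpace Θ] (L : Θ → ℝ) (π : Measure Θ)
    (γ : ℝ) (q : Measure Θ) : ℝ :=
  ∫ θ, L θ ∂q + γ * KL q π

/-- Gibbs' inequality: the KL divergence is nonnegative. -/
lemma kl_nonneg' {Θ : Type*} [MeasurableSpace Θ] (q π : Measure Θ)
    [IsProbabilityMeasure q] [IsProbabilityMeasure π]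
    (hac : q ≪ π) (hint : Integrable (llr q π) q) :
    0 ≤ ∫ θ, llr q π θ ∂q := by
  have h1 : ∀ᵐ θ ∂q, -llr q π θ ≤ (π.rnDeriv q θ).toReal - 1 := by
    filter_upwards [exp_neg_llr hac] with θ hθ
    have := Real.add_one_le_exp (-llr q π θ)
    rw [hθ] at this
    linarith
  have hint2 : Integrable (fun θ => (π.rnDeriv q θ).toReal - 1) q :=
    (Measure.integrable_toReal_rnDeriv).sub (integrable_const 1)
  have h2 : ∫ θ, -llr q π θ ∂q ≤ ∫ θ, ((π.rnDeriv q θ).toReal - 1) ∂q :=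
    integral_mono_ae hint.neg hint2 h1
  have h3 : ∫ θ, (π.rnDeriv q θ).toReal ∂q ≤ 1 := by
    have := Measure.setIntegral_toReal_rnDeriv_le (μ := π) (ν := q)
      (s := Set.univ) (measure_ne_top π _)
    simpa [Measure.restrict_univ] using this
  rw [integral_neg] at h2
  rw [integral_sub Measure.integrable_toReal_rnDeriv (integrable_const 1)] at h2
  simp only [integral_const, measure_univ, probReal_univ, ENNReal.toReal_one, one_smul, smul_eq_mul] at h2
  linarith

/-- Objective collapse, part 1: as `γ → 0`, any minimisers `q_γ` of `J_γ` satisfy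
`E_{q_γ}[L] → L*` and `J_γ(q_γ) → L*`. -/
theorem objective_collapse_loss {Θ : Type*} [MeasurableSpace Θ]
    (π : Measure Θ) [IsProbabilityMeasure π]
    (L : Θ → ℝ) (hL : Measurable L)
    (Lstar : ℝ) (hglb : IsGLB (Set.range L) Lstar)
    (hπ : ∀ δ : ℝ, 0 < δ → 0 < π {θ | L θ ≤ Lstar + δ})
    (γ : ℕ → ℝ) (hγpos : ∀ m, 0 < γ m) (hγ0 : Tendsto γ atTop (nhds 0))
    (q : ℕ → Measure Θ) (hqprob : ∀ m, IsProbabilityMeasure (q m))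
    (hqac : ∀ m, q m ≪ π)
    (hqint : ∀ m, Integrable L (q m)) (hqllr : ∀ m, Integrable (llr (q m) π) (q m))
    (hmin : ∀ m, ∀ q' : Measure Θ, IsProbabilityMeasure q' → q' ≪ π →
      Jobj L π (γ m) (q m) ≤ Jobj L π (γ m) q') :
    Tendsto (fun m => ∫ θ, L θ ∂(q m)) atTop (nhds Lstar) ∧
    Tendsto (fun m => Jobj L π (γ m) (q m)) atTop (nhds Lstar) := by
  have hLge : ∀ θ, Lstar ≤ L θ := fun θ => hglb.1 ⟨θ, rfl⟩
  -- lower bound on the mean loss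
  have hIlow : ∀ m, Lstar ≤ ∫ θ, L θ ∂(q m) := by
    intro m
    haveI := hqprob m
    calc Lstar = ∫ _, Lstar ∂(q m) := by simp
    _ ≤ ∫ θ, L θ ∂(q m) := integral_mono (integrable_const _) (hqint m) hLge
  -- the objective dominates the mean loss
  have hIJ : ∀ m, ∫ θ, L θ ∂(q m) ≤ Jobj L π (γ m) (q m) := by
    intro m
    haveI := hqprob m
    have hKL : 0 ≤ KL (q m) π := kl_nonneg' (q m) π (hqac m) (hqllr m)
    have : 0 ≤ γ m * KL (q m) π := mul_nonneg (hγpos m).le hKL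
    simp only [Jobj]; linarith
  have hJlow : ∀ m, Lstar ≤ Jobj L π (γ m) (q m) := fun m => (hIlow m).trans (hIJ m)
  -- upper bound on the objective via the conditioned prior
  have hupper : ∀ δ : ℝ, 0 < δ → ∃ C : ℝ,
      ∀ m, Jobj L π (γ m) (q m) ≤ Lstar + δ + γ m * C := by
    intro δ hδ
    set S : Set Θ := {θ | L θ ≤ Lstar + δ} with hSdef
    have hSm : MeasurableSet S := hL measurableSet_Iic
    have hS0 : 0 < π S := hπ δ hδ
    have hStop : π S ≠ ⊤ := (measure_lt_top π S).ne
    set c : ℝ≥0∞ := (π S)⁻¹ with hcdef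
    have hc0 : c ≠ 0 := by simp [hcdef, hStop]
    have hctop : c ≠ ⊤ := by simp [hcdef, hS0.ne']
    have hcS : c * π S = 1 := ENNReal.inv_mul_cancel hS0.ne' hStop
    set q' : Measure Θ := c • π.restrict S with hq'def
    have hresac : π.restrict S ≪ π := Measure.absolutelyContinuous_of_le Measure.restrict_le_self
    have hq'ac : q' ≪ π := by
      intro s hs
      simp only [hq'def, Measure.smul_apply, smul_eq_mul]
      rw [hresac hs]; simp
    haveI hq'prob : IsProbabilityMeasure q' := by
      constructor
      simp only [hq'def, Measure.smul_apply, Measure.restrict_apply MeasurableSet.univ,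
        Set.univ_inter, smul_eq_mul]
      exact hcS
    -- the llr of q' w.r.t. π is a.e. constant equal to log c.toReal
    have hllr : llr q' π =ᵐ[π.restrict S] fun _ => Real.log c.toReal := by
      have h1 : llr q' π =ᵐ[π.restrict S]
          fun θ => llr (π.restrict S) π θ + Real.log c.toReal :=
        llr_smul_left hresac c hc0 hctop
      have h2 : (π.restrict S).rnDeriv π =ᵐ[π] S.indicator 1 :=
        Measure.rnDeriv_restrict_self π hSm
      have h3 : ∀ᵐ θ ∂(π.restrict S), llr (π.restrict S) π θ = 0 := by
        filter_upwards [hresac.ae_le h2, ae_restrict_mem hSm] with θ hθ hθS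
        simp [llr, hθ, Set.indicator_of_mem hθS]
      filter_upwards [h1, h3] with θ h1 h3
      rw [h1, h3, zero_add]
    have hKLq' : KL q' π = Real.log c.toReal := by
      rw [KL, hq'def, integral_smul_measure]
      rw [integral_congr_ae hllr, setIntegral_const]
      simp only [smul_eq_mul]
      rw [← mul_assoc, mul_comm (c.toReal), measureReal_def, ← ENNReal.toReal_mul, mul_comm (π S), hcS]
      simp
    -- the mean of L under q' is at most Lstar + δ
    have hLS : ∀ θ ∈ S, L θ ≤ Lstar + δ := fun θ hθ => hθ
    have hLint : IntegrableOn L S π := by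
      refine Integrable.mono' (integrable_const (|Lstar| + |δ|)) hL.aestronglyMeasurable ?_
      filter_upwards [ae_restrict_mem hSm] with θ hθ
      rw [Real.norm_eq_abs, abs_le]
      constructor
      · have := hLge θ; have := neg_abs_le Lstar; have := abs_nonneg δ; linarith
      · have := hLS θ hθ; have := le_abs_self Lstar; have := le_abs_self δ; linarith
    have hEq' : ∫ θ, L θ ∂q' ≤ Lstar + δ := by
      rw [hq'def, integral_smul_measure]
      have h1 : ∫ θ in S, L θ ∂π ≤ ∫ _ in S, (Lstar + δ) ∂π :=
        setIntegral_mono_on hLint (integrable_const _) hSm hLS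
      rw [setIntegral_const] at h1
      calc c.toReal • ∫ θ in S, L θ ∂π ≤ c.toReal • ((π S).toReal • (Lstar + δ)) := by
            apply smul_le_smul_of_nonneg_left h1 ENNReal.toReal_nonneg
      _ = (c * π S).toReal • (Lstar + δ) := by
            rw [ENNReal.toReal_mul, smul_smul]
      _ = Lstar + δ := by rw [hcS]; simp
    refine ⟨Real.log c.toReal, fun m => ?_⟩
    calc Jobj L π (γ m) (q m) ≤ Jobj L π (γ m) q' := hmin m q' hq'prob hq'ac
    _ = ∫ θ, L θ ∂q' + γ m * Real.log c.toReal := by rw [Jobj, hKLq']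
    _ ≤ Lstar + δ + γ m * Real.log c.toReal := by linarith
  -- conclude via order-topology convergence
  have hJ : Tendsto (fun m => Jobj L π (γ m) (q m)) atTop (nhds Lstar) := by
    rw [tendsto_order]
    constructor
    · intro a ha
      exact Eventually.of_forall fun m => lt_of_lt_of_le ha (hJlow m)
    · intro a ha
      have hδ : 0 < (a - Lstar) / 2 := by linarith
      obtain ⟨C, hC⟩ := hupper ((a - Lstar) / 2) hδ
      have hmul : Tendsto (fun m => γ m * C) atTop (nhds 0) := by
        simpa using hγ0.mul_const C
      filter_upwards [hmul.eventually (gt_mem_nhds hδ)] with m hm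
      have := hC m
      linarith
  refine ⟨?_, hJ⟩
  exact tendsto_of_tendsto_of_tendsto_of_le_of_le tendsto_const_nhds hJ hIlow hIJ
end

section
/- Under the hypotheses of the objective-collapse theorem (minimisers q_γ of J_γ(q) = E_q[L] + γ·KL(q‖π) exist, L* = inf L > −∞, π(S_δ) > 0 for all δ > 0), for every ε > 0 the mass assigned by q_γ to the set {θ : L(θ) ≥ L* + ε} tends to 0 as γ → 0. -/
open MeasureTheory ProbabilityTheory Filter
open scoped ENNReal

/-- Gibbs' inequality: the KL divergence between two probability measures is nonnegative. -/
lemma myKL_nonneg {Θ : Type*} [MeasurableSpace Θ] (q p : Measure Θ)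
    [IsProbabilityMeasure q] [IsProbabilityMeasure p] (hac : q ≪ p)
    (hint : Integrable (llr q p) q) : 0 ≤ ∫ θ, llr q p θ ∂q := by
  set f : Θ → ℝ := fun x => ((q.rnDeriv p x).toReal)⁻¹ with hf
  have heq : (fun x => Real.exp (-llr q p x)) =ᵐ[q] f := by
    filter_upwards [Measure.rnDeriv_pos hac, hac.ae_le (Measure.rnDeriv_lt_top q p)]
      with x hpos hlt
    have ht : 0 < (q.rnDeriv p x).toReal := ENNReal.toReal_pos hpos.ne' hlt.ne
    rw [llr_def, ← Real.log_inv, Real.exp_log (by positivity)]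
  have hlin : ∫⁻ x, (q.rnDeriv p x)⁻¹ ∂q ≤ 1 := by
    rw [← MeasureTheory.lintegral_rnDeriv_mul hac (f := fun x => (q.rnDeriv p x)⁻¹)
      (Measure.measurable_rnDeriv q p).inv.aemeasurable]
    calc ∫⁻ x, q.rnDeriv p x * (q.rnDeriv p x)⁻¹ ∂p ≤ ∫⁻ _, 1 ∂p :=
          lintegral_mono fun x => ENNReal.mul_inv_le_one _
      _ = 1 := by simp
  have hnn : 0 ≤ᵐ[q] f := Filter.Eventually.of_forall fun x => by positivity
  have hofReal : (fun x => ENNReal.ofReal (f x)) =ᵐ[q] fun x => (q.rnDeriv p x)⁻¹ := by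
    filter_upwards [Measure.rnDeriv_pos hac] with x hpos
    show ENNReal.ofReal (((q.rnDeriv p x).toReal)⁻¹) = (q.rnDeriv p x)⁻¹
    rw [← ENNReal.toReal_inv, ENNReal.ofReal_toReal (by simp [hpos.ne'])]
  have hfin : ∫⁻ x, ENNReal.ofReal (f x) ∂q ≤ 1 := by
    rw [lintegral_congr_ae hofReal]; exact hlin
  have hintf : Integrable f q := by
    refine ⟨((Measure.measurable_rnDeriv q p).ennreal_toReal.inv).aestronglyMeasurable, ?_⟩
    rw [hasFiniteIntegral_iff_norm]
    calc ∫⁻ x, ENNReal.ofReal ‖f x‖ ∂q = ∫⁻ x, ENNReal.ofReal (f x) ∂q := by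
          apply lintegral_congr fun x => by
            rw [Real.norm_eq_abs, abs_of_nonneg (by positivity)]
      _ ≤ 1 := hfin
      _ < ⊤ := ENNReal.one_lt_top
  have hintexp : Integrable (fun x => Real.exp (-llr q p x)) q := hintf.congr heq.symm
  have hjen : Real.exp (∫ x, -llr q p x ∂q) ≤ ∫ x, Real.exp (-llr q p x) ∂q := by
    have := convexOn_exp.map_integral_le (μ := q) (f := fun x => -llr q p x)
      Real.continuous_exp.continuousOn isClosed_univ
      (Filter.Eventually.of_forall fun _ => Set.mem_univ _)
      hint.neg (by exact hintexp)
    simpa using this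
  have hle1 : ∫ x, Real.exp (-llr q p x) ∂q ≤ 1 := by
    rw [integral_congr_ae heq]
    rw [integral_eq_lintegral_of_nonneg_ae hnn hintf.aestronglyMeasurable]
    calc (∫⁻ x, ENNReal.ofReal (f x) ∂q).toReal ≤ (1 : ℝ≥0∞).toReal :=
          ENNReal.toReal_mono (by simp) hfin
      _ = 1 := by simp
  have hexp : Real.exp (∫ x, -llr q p x ∂q) ≤ Real.exp 0 := by
    simpa using hjen.trans hle1
  have h2 := Real.exp_le_exp.mp hexp
  rw [integral_neg] at h2
  linarith

/-- Objective collapse, part 2: as `γ → 0`, the minimisers `q_γ` assign vanishing mass to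
the set `{θ : L θ ≥ L* + ε}` for every `ε > 0`. -/
theorem objective_collapse_mass {Θ : Type*} [MeasurableSpace Θ]
    (π : Measure Θ) [IsProbabilityMeasure π]
    (L : Θ → ℝ) (hL : Measurable L)
    (Lstar : ℝ) (hglb : IsGLB (Set.range L) Lstar)
    (hπ : ∀ δ : ℝ, 0 < δ → 0 < π {θ | L θ ≤ Lstar + δ})
    (γ : ℕ → ℝ) (hγpos : ∀ m, 0 < γ m) (hγ0 : Tendsto γ atTop (nhds 0))
    (q : ℕ → Measure Θ) (hqprob : ∀ m, IsProbabilityMeasure (q m))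
    (hqac : ∀ m, q m ≪ π)
    (hqint : ∀ m, Integrable L (q m)) (hqllr : ∀ m, Integrable (llr (q m) π) (q m))
    (hmin : ∀ m, ∀ q' : Measure Θ, IsProbabilityMeasure q' → q' ≪ π →
      Jobj L π (γ m) (q m) ≤ Jobj L π (γ m) q') :
    ∀ ε : ℝ, 0 < ε →
      Tendsto (fun m => q m {θ | Lstar + ε ≤ L θ}) atTop (nhds 0) := by
  intro ε hε
  set A : Set Θ := {θ | Lstar + ε ≤ L θ} with hAdef
  have hA : MeasurableSet A := measurableSet_le measurable_const hL
  -- Key quantitative bound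
  have key : ∀ δ : ℝ, 0 < δ → ∃ C : ℝ, 0 ≤ C ∧
      ∀ m, ε * (q m A).toReal ≤ δ + γ m * C := by
    intro δ hδ
    set S : Set Θ := {θ | L θ ≤ Lstar + δ} with hSdef
    have hS : MeasurableSet S := measurableSet_le hL measurable_const
    have hS0 : π S ≠ 0 := (hπ δ hδ).ne'
    have hStop : π S ≠ ⊤ := measure_ne_top π S
    have htR0 : (π S).toReal ≠ 0 := ENNReal.toReal_ne_zero.mpr ⟨hS0, hStop⟩
    have htRpos : 0 < (π S).toReal := lt_of_le_of_ne ENNReal.toReal_nonneg (Ne.symm htR0)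
    set q' : Measure Θ := (π S)⁻¹ • π.restrict S with hq'def
    have hq'prob : IsProbabilityMeasure q' := ⟨by
      rw [hq'def, Measure.smul_apply, Measure.restrict_apply_univ, smul_eq_mul,
        ENNReal.inv_mul_cancel hS0 hStop]⟩
    have hq'ac : q' ≪ π :=
      (Measure.absolutelyContinuous_of_le Measure.restrict_le_self).smul_left _
    -- the Radon–Nikodym derivative of q' w.r.t. π
    have hrn : q'.rnDeriv π =ᵐ[π] fun x => (π S)⁻¹ * S.indicator 1 x := by
      have h1 := Measure.rnDeriv_restrict_self π hS
      have h2 := Measure.rnDeriv_smul_left_of_ne_top (π.restrict S) π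
        (r := (π S)⁻¹) (by simp [hS0])
      filter_upwards [h1, h2] with x hx1 hx2
      rw [hq'def, hx2, Pi.smul_apply, hx1, smul_eq_mul]
    have hmemS : ∀ᵐ x ∂q', x ∈ S := by
      have hz : q' Sᶜ = 0 := by
        rw [hq'def, Measure.smul_apply, Measure.restrict_apply hS.compl,
          Set.compl_inter_self, measure_empty, smul_eq_mul, mul_zero]
      rw [ae_iff]
      simpa [Set.compl_def] using hz
    have hllr : llr q' π =ᵐ[q'] fun _ => -Real.log (π S).toReal := by
      filter_upwards [hq'ac.ae_le hrn, hmemS] with x hx hxS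
      simp only [llr_def, hx, Set.indicator_of_mem hxS, Pi.one_apply, mul_one]
      rw [ENNReal.toReal_inv, Real.log_inv]
    have hKL : KL q' π = -Real.log (π S).toReal := by
      rw [KL, integral_congr_ae hllr, integral_const, measureReal_def, measure_univ]
      simp
    have hC : 0 ≤ -Real.log (π S).toReal := by
      have h1le : (π S).toReal ≤ 1 := by
        have := ENNReal.toReal_mono (by simp) (prob_le_one (μ := π) (s := S))
        simpa using this
      have := Real.log_nonpos ENNReal.toReal_nonneg h1le
      linarith
    -- E_{q'}[L] ≤ L* + δ
    have hLbound : ∀ᵐ x ∂π.restrict S, ‖L x‖ ≤ |Lstar| + δ := by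
      filter_upwards [ae_restrict_mem hS] with x hx
      have h1 : Lstar ≤ L x := hglb.1 (Set.mem_range_self x)
      have h2 : L x ≤ Lstar + δ := hx
      rw [Real.norm_eq_abs, abs_le]
      constructor
      · have := neg_abs_le Lstar; linarith
      · have := le_abs_self Lstar; linarith
    have hLS : IntegrableOn L S π :=
      Integrable.mono' (integrable_const _) hL.aestronglyMeasurable hLbound
    have hintLq' : ∫ θ, L θ ∂q' ≤ Lstar + δ := by
      have h1 : ∫ θ, L θ ∂(π.restrict S) ≤ (Lstar + δ) * (π S).toReal := by
        calc ∫ θ, L θ ∂(π.restrict S) ≤ ∫ _, (Lstar + δ) ∂(π.restrict S) := by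
              refine integral_mono_ae hLS (integrable_const _) ?_
              filter_upwards [ae_restrict_mem hS] with x hx using hx
          _ = (Lstar + δ) * (π S).toReal := by
              rw [integral_const, measureReal_def, Measure.restrict_apply_univ, smul_eq_mul]; ring
      calc ∫ θ, L θ ∂q' = ((π S)⁻¹).toReal * ∫ θ, L θ ∂(π.restrict S) := by
            rw [hq'def, integral_smul_measure, smul_eq_mul]
        _ ≤ ((π S)⁻¹).toReal * ((Lstar + δ) * (π S).toReal) :=
            mul_le_mul_of_nonneg_left h1 ENNReal.toReal_nonneg
        _ = Lstar + δ := by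
            rw [ENNReal.toReal_inv]; field_simp
    refine ⟨-Real.log (π S).toReal, hC, fun m => ?_⟩
    haveI := hqprob m
    have hKLq : 0 ≤ KL (q m) π := myKL_nonneg _ _ (hqac m) (hqllr m)
    -- lower bound on E_{q m}[L]
    have hlow : Lstar + ε * (q m A).toReal ≤ ∫ θ, L θ ∂(q m) := by
      have hgle : ∀ θ, Lstar + A.indicator (fun _ => ε) θ ≤ L θ := by
        intro θ
        by_cases hθ : θ ∈ A
        · rw [Set.indicator_of_mem hθ]; exact hθ
        · rw [Set.indicator_of_notMem hθ, add_zero]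
          exact hglb.1 (Set.mem_range_self θ)
      have hgint : Integrable (fun θ => Lstar + A.indicator (fun _ => ε) θ) (q m) :=
        (integrable_const _).add ((integrable_const ε).indicator hA)
      calc Lstar + ε * (q m A).toReal
          = ∫ θ, (Lstar + A.indicator (fun _ => ε) θ) ∂(q m) := by
            rw [integral_add (integrable_const _) ((integrable_const ε).indicator hA),
              integral_const, integral_indicator_const _ hA, measureReal_def, measureReal_def, measure_univ, smul_eq_mul,
              smul_eq_mul, ENNReal.toReal_one]
            ring
        _ ≤ ∫ θ, L θ ∂(q m) := integral_mono hgint (hqint m) hgle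
    have hub := hmin m q' hq'prob hq'ac
    have h4 : ∫ θ, L θ ∂(q m) ≤ Jobj L π (γ m) (q m) := by
      unfold Jobj
      have := mul_nonneg (hγpos m).le hKLq
      linarith
    have h5 : Jobj L π (γ m) q' ≤ Lstar + δ + γ m * (-Real.log (π S).toReal) := by
      unfold Jobj
      rw [hKL]
      linarith
    linarith
  -- pass to the limit
  have hto : Tendsto (fun m => (q m A).toReal) atTop (nhds 0) := by
    rw [NormedAddCommGroup.tendsto_nhds_zero]
    intro η hη
    obtain ⟨C, hC, hb⟩ := key (ε * η / 2) (by positivity)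
    have hγC : Tendsto (fun m => γ m * C) atTop (nhds 0) := by
      simpa using hγ0.mul_const C
    have hev : ∀ᶠ m in atTop, γ m * C < ε * η / 2 :=
      hγC.eventually_lt_const (by positivity)
    filter_upwards [hev] with m hm
    have hbm := hb m
    have h0 : 0 ≤ (q m A).toReal := ENNReal.toReal_nonneg
    rw [Real.norm_eq_abs, abs_of_nonneg h0]
    nlinarith
  have hne : ∀ m, q m A ≠ ⊤ := fun m => measure_ne_top _ _
  have := (ENNReal.tendsto_toReal_iff hne ENNReal.zero_ne_top).mp (by simpa using hto)
  simpa using this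
end

section
/- Under the hypotheses of the objective-collapse theorem, if additionally L has a unique well-separated minimiser θ̂ — meaning inf_{d(θ,θ̂) ≥ η} L(θ) − L(θ̂) > 0 for every η > 0 on a metric space (Θ,d) — then the minimisers q_γ converge weakly to the Dirac measure δ_{θ̂} as γ → 0. -/
open MeasureTheory ProbabilityTheory Filter
open scoped ENNReal

/-- Gibbs' inequality: the KL divergence between probability measures is nonnegative. -/
lemma KL_nonneg' {Θ : Type*} [MeasurableSpace Θ] (q π : Measure Θ)
    [IsProbabilityMeasure q] [IsProbabilityMeasure π] (hqπ : q ≪ π)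
    (hllr : Integrable (llr q π) q) : 0 ≤ KL q π := by
  set f : Θ → ℝ := fun x => (π.rnDeriv q x).toReal with hf
  have hf_int : Integrable f q :=
    integrable_toReal_of_lintegral_ne_top (π.measurable_rnDeriv q).aemeasurable
      (Measure.lintegral_rnDeriv_lt_top π q).ne
  have hf_le : ∫ x, f x ∂q ≤ 1 := by
    have := Measure.setIntegral_toReal_rnDeriv_le (μ := π) (ν := q) (s := Set.univ)
      (measure_ne_top π Set.univ)
    simpa using this
  have h2 : llr π q ≤ᵐ[q] fun x => f x - 1 := by
    filter_upwards [Measure.rnDeriv_pos' hqπ, π.rnDeriv_lt_top q] with x hx hxt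
    exact Real.log_le_sub_one_of_pos (ENNReal.toReal_pos hx.ne' hxt.ne)
  have hint2 : Integrable (llr π q) q := (hllr.neg).congr (MeasureTheory.neg_llr hqπ)
  have h3 : ∫ x, llr π q x ∂q ≤ ∫ x, (f x - 1) ∂q :=
    integral_mono_ae hint2 (hf_int.sub (integrable_const 1)) h2
  have h4 : ∫ x, (f x - 1) ∂q ≤ 0 := by
    rw [integral_sub hf_int (integrable_const 1)]
    simp only [integral_const, measureReal_def, measure_univ, ENNReal.toReal_one, one_smul, smul_eq_mul]
    linarith
  have h5 : KL q π = -∫ x, llr π q x ∂q := by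
    rw [KL, ← integral_neg]
    refine integral_congr_ae ?_
    filter_upwards [MeasureTheory.neg_llr hqπ] with x hx
    simpa [Pi.neg_apply] using congrArg Neg.neg hx
  linarith

/-- Objective collapse, part 3: if `L` has a unique well-separated minimiser `θ̂`, the
minimisers `q_γ` converge weakly to the Dirac measure at `θ̂` as `γ → 0`. -/
theorem objective_collapse_dirac {Θ : Type*} [MetricSpace Θ] [MeasurableSpace Θ]
    [BorelSpace Θ]
    (π : Measure Θ) [IsProbabilityMeasure π]
    (L : Θ → ℝ) (hL : Measurable L)
    (Lstar : ℝ) (hglb : IsGLB (Set.range L) Lstar)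
    (hπ : ∀ δ : ℝ, 0 < δ → 0 < π {θ | L θ ≤ Lstar + δ})
    (γ : ℕ → ℝ) (hγpos : ∀ m, 0 < γ m) (hγ0 : Tendsto γ atTop (nhds 0))
    (q : ℕ → Measure Θ) (hqprob : ∀ m, IsProbabilityMeasure (q m))
    (hqac : ∀ m, q m ≪ π)
    (hqint : ∀ m, Integrable L (q m)) (hqllr : ∀ m, Integrable (llr (q m) π) (q m))
    (hmin : ∀ m, ∀ q' : Measure Θ, IsProbabilityMeasure q' → q' ≪ π →
      Jobj L π (γ m) (q m) ≤ Jobj L π (γ m) q')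
    (θhat : Θ) (hθhat : ∀ θ, L θhat ≤ L θ)
    (hsep : ∀ η : ℝ, 0 < η → ∃ Δ : ℝ, 0 < Δ ∧ ∀ θ, η ≤ dist θ θhat → L θhat + Δ ≤ L θ) :
    ∀ g : BoundedContinuousFunction Θ ℝ,
      Tendsto (fun m => ∫ θ, g θ ∂(q m)) atTop (nhds (g θhat)) := by
  haveI := hqprob
  have hLlb : ∀ θ, Lstar ≤ L θ := fun θ => hglb.1 ⟨θ, rfl⟩
  have hLθ : L θhat = Lstar :=
    le_antisymm (hglb.2 fun y ⟨θ, hθ⟩ => hθ ▸ hθhat θ) (hLlb θhat)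
  -- lower bound on the expected loss
  have hlow : ∀ m, Lstar ≤ ∫ θ, L θ ∂(q m) := by
    intro m
    have : ∫ _θ, (Lstar : ℝ) ∂(q m) ≤ ∫ θ, L θ ∂(q m) :=
      integral_mono (integrable_const _) (hqint m) hLlb
    simpa using this
  have hKL : ∀ m, 0 ≤ KL (q m) π := fun m => KL_nonneg' _ _ (hqac m) (hqllr m)
  -- upper bound via the normalized restriction of π to a sublevel set
  have hub : ∀ δ : ℝ, 0 < δ → ∃ C : ℝ, 0 ≤ C ∧
      ∀ m, ∫ θ, L θ ∂(q m) ≤ Lstar + δ + γ m * C := by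
    intro δ hδ
    set A : Set Θ := {θ | L θ ≤ Lstar + δ} with hA
    have hAmeas : MeasurableSet A := measurableSet_le hL measurable_const
    set c : ℝ≥0∞ := π A with hc
    have hc0 : c ≠ 0 := (hπ δ hδ).ne'
    have hc_top : c ≠ ⊤ := measure_ne_top π A
    set q' : Measure Θ := c⁻¹ • π.restrict A with hq'
    haveI hq'prob : IsProbabilityMeasure q' := ⟨by
      simp only [hq', Measure.smul_apply, Measure.restrict_apply_univ, smul_eq_mul]
      exact ENNReal.inv_mul_cancel hc0 hc_top⟩
    have hq'ac : q' ≪ π :=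
      (Measure.smul_absolutelyContinuous).trans
        (Measure.absolutelyContinuous_of_le Measure.restrict_le_self)
    have hq'Ac : q' Aᶜ = 0 := by
      simp [hq', Measure.smul_apply, Measure.restrict_apply hAmeas.compl]
    have hAae : ∀ᵐ θ ∂q', θ ∈ A := by
      rw [ae_iff]
      exact hq'Ac
    -- expected loss under q' is at most Lstar + δ
    have hLint' : Integrable L q' := by
      refine Integrable.mono' (integrable_const (|Lstar| + δ)) hL.aestronglyMeasurable ?_
      filter_upwards [hAae] with θ hθ
      have h1 : Lstar ≤ L θ := hLlb θ
      have h2 : L θ ≤ Lstar + δ := hθ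
      rw [Real.norm_eq_abs, abs_le]
      constructor <;> [skip; skip] <;>
        · cases abs_cases Lstar with
          | inl h => linarith [h.1]
          | inr h => linarith [h.1]
    have hLq' : ∫ θ, L θ ∂q' ≤ Lstar + δ := by
      have : ∫ θ, L θ ∂q' ≤ ∫ _θ, (Lstar + δ) ∂q' := by
        refine integral_mono_ae hLint' (integrable_const _) ?_
        filter_upwards [hAae] with θ hθ using hθ
      simpa using this
    -- KL(q'‖π) = -log (π A)
    set C : ℝ := -Real.log c.toReal with hCdef
    have hC0 : 0 ≤ C := by
      have h1 : c.toReal ≤ 1 := by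
        have := prob_le_one (μ := π) (s := A)
        simpa [hc] using ENNReal.toReal_mono ENNReal.one_ne_top this
      simpa [hCdef] using Real.log_nonpos ENNReal.toReal_nonneg h1
    have hrn : q'.rnDeriv π =ᵐ[π] fun θ => c⁻¹ * A.indicator 1 θ := by
      have h1 := Measure.rnDeriv_smul_left_of_ne_top (π.restrict A) π
        (r := c⁻¹) (ENNReal.inv_ne_top.2 hc0)
      have h2 := π.rnDeriv_restrict_self hAmeas
      filter_upwards [h1, h2] with θ h1 h2
      rw [hq'] at *
      rw [h1]
      simp [h2]
    have hllr' : llr q' π =ᵐ[q'] fun _ => C := by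
      filter_upwards [hq'ac.ae_le hrn, hAae] with θ hθ hθA
      rw [llr, hθ]
      simp only [Set.indicator_of_mem hθA, Pi.one_apply, mul_one]
      rw [ENNReal.toReal_inv, Real.log_inv]
    have hKLq' : KL q' π = C := by
      rw [KL, integral_congr_ae hllr']
      simp
    refine ⟨C, hC0, fun m => ?_⟩
    have h1 : ∫ θ, L θ ∂(q m) ≤ Jobj L π (γ m) (q m) := by
      have := mul_nonneg (hγpos m).le (hKL m)
      rw [Jobj]; linarith
    have h2 : Jobj L π (γ m) (q m) ≤ Jobj L π (γ m) q' := hmin m q' hq'prob hq'ac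
    have h3 : Jobj L π (γ m) q' ≤ Lstar + δ + γ m * C := by
      rw [Jobj, hKLq']
      linarith
    linarith
  -- the expected loss converges to Lstar
  have heps : Tendsto (fun m => ∫ θ, L θ ∂(q m) - Lstar) atTop (nhds 0) := by
    rw [tendsto_order]
    constructor
    · intro a ha
      filter_upwards with m
      have := hlow m
      linarith
    · intro a ha
      obtain ⟨C, hC0, hCb⟩ := hub (a / 2) (half_pos ha)
      have hγC : Tendsto (fun m => γ m * C) atTop (nhds 0) := by
        simpa using hγ0.mul_const C
      filter_upwards [hγC.eventually_lt_const (half_pos ha)] with m hm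
      have := hCb m
      linarith
  -- the mass outside any ball around θhat tends to 0
  have hSmall : ∀ η : ℝ, 0 < η →
      Tendsto (fun m => ((q m) {θ | η ≤ dist θ θhat}).toReal) atTop (nhds 0) := by
    intro η hη
    obtain ⟨Δ, hΔ, hΔle⟩ := hsep η hη
    set S : Set Θ := {θ | η ≤ dist θ θhat} with hS
    have hSmeas : MeasurableSet S :=
      measurableSet_le measurable_const ((continuous_id.dist continuous_const).measurable)
    have key : ∀ m, Δ * ((q m) S).toReal ≤ ∫ θ, L θ ∂(q m) - Lstar := by
      intro m
      have hptwise : ∀ θ, S.indicator (fun _ => Δ) θ ≤ L θ - Lstar := by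
        intro θ
        by_cases hθ : θ ∈ S
        · rw [Set.indicator_of_mem hθ]
          have := hΔle θ hθ
          linarith [hLθ ▸ this]
        · rw [Set.indicator_of_notMem hθ]
          linarith [hLlb θ]
      have h1 : ∫ θ, S.indicator (fun _ => Δ) θ ∂(q m) ≤ ∫ θ, (L θ - Lstar) ∂(q m) :=
        integral_mono ((integrable_const Δ).indicator hSmeas)
          ((hqint m).sub (integrable_const _)) hptwise
      rw [integral_indicator_const Δ hSmeas, integral_sub (hqint m) (integrable_const _)] at h1
      simp only [smul_eq_mul, integral_const, measureReal_def, measure_univ, ENNReal.toReal_one, one_smul] at h1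
      linarith [h1]
    refine squeeze_zero (fun m => ENNReal.toReal_nonneg)
      (fun m => ?_) ?_ (g := fun m => (∫ θ, L θ ∂(q m) - Lstar) / Δ)
    · rw [le_div_iff₀ hΔ]
      linarith [key m, mul_comm Δ (((q m) S).toReal)]
    · simpa using heps.div_const Δ
  -- conclusion: weak convergence
  intro g
  rw [Metric.tendsto_atTop]
  intro ε hε
  obtain ⟨η, hη, hgη⟩ := Metric.continuousAt_iff.1 g.continuous.continuousAt (ε / 4)
    (by positivity)
  set S : Set Θ := {θ | η ≤ dist θ θhat} with hS
  have hSmeas : MeasurableSet S :=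
    measurableSet_le measurable_const ((continuous_id.dist continuous_const).measurable)
  have hbound : ∀ m, dist (∫ θ, g θ ∂(q m)) (g θhat) ≤
      ε / 4 + 2 * ‖g‖ * ((q m) S).toReal := by
    intro m
    have hgi : Integrable (fun θ => g θ) (q m) := g.integrable (q m)
    have h1 : ∫ θ, g θ ∂(q m) - g θhat = ∫ θ, (g θ - g θhat) ∂(q m) := by
      rw [integral_sub hgi (integrable_const _)]
      simp
    have hptwise : ∀ θ, |g θ - g θhat| ≤ ε / 4 + S.indicator (fun _ => 2 * ‖g‖) θ := by
      intro θ
      by_cases hθ : θ ∈ S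
      · rw [Set.indicator_of_mem hθ]
        have h2 : |g θ - g θhat| ≤ 2 * ‖g‖ := by
          calc |g θ - g θhat| ≤ |g θ| + |g θhat| := abs_sub _ _
            _ ≤ ‖g‖ + ‖g‖ := add_le_add (g.norm_coe_le_norm θ) (g.norm_coe_le_norm θhat)
            _ = 2 * ‖g‖ := by ring
        linarith
      · rw [Set.indicator_of_notMem hθ]
        have hd : dist θ θhat < η := lt_of_not_ge hθ
        have := hgη hd
        rw [Real.dist_eq] at this
        linarith
    rw [Real.dist_eq, h1]
    calc |∫ θ, (g θ - g θhat) ∂(q m)| ≤ ∫ θ, |g θ - g θhat| ∂(q m) := by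
          simpa [Real.norm_eq_abs] using
            norm_integral_le_integral_norm (μ := q m) (fun θ => g θ - g θhat)
      _ ≤ ∫ θ, (ε / 4 + S.indicator (fun _ => 2 * ‖g‖) θ) ∂(q m) := by
          refine integral_mono (hgi.sub (integrable_const _)).abs
            ((integrable_const _).add ((integrable_const _).indicator hSmeas))
            hptwise
      _ = ε / 4 + 2 * ‖g‖ * ((q m) S).toReal := by
          rw [integral_add (integrable_const _) ((integrable_const _).indicator hSmeas),
            integral_const, integral_indicator_const _ hSmeas]
          simp [mul_comm, measureReal_def]
  have htend : Tendsto (fun m => ε / 4 + 2 * ‖g‖ * ((q m) S).toReal) atTop (nhds (ε / 4)) := by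
    have := (hSmall η hη).const_mul (2 * ‖g‖)
    simpa using tendsto_const_nhds.add this
  obtain ⟨N, hN⟩ := eventually_atTop.1 (htend.eventually_lt_const (by linarith : ε / 4 < ε / 2))
  exact ⟨N, fun m hm => lt_of_le_of_lt (hbound m) (lt_trans (hN m hm) (by linarith))⟩
end
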